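/- Let n ≥ 2, let a = (a_1,…,a_n) be a tuple of integers with each a_i ≥ 2, and let t, s ∈ ℂ. Suppose z = (z_1,…,z_n) ∈ ℂ^n satisfies ∂g_a^{t,s}/∂z_j(z) = 0 for all j with 2 ≤ j ≤ n and s + t·z_1^{a_1} = 0. Then z_2 = z_3 = ⋯ = z_n = 0 and g_a^{t,s}(z) = z_1. Conversely, if s + t·z_1^{a_1} ≠ 0 and z satisfies the same system of equations, then z_j ≠ 0 for all j with 2 ≤ j ≤ n. -/

import Mathlib

open scoped BigOperators

/-- The signed chain polynomial (0-based indices). -/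
noncomputable def chainP (n : ℕ) (a : ℕ → ℕ) (z : ℕ → ℂ) : ℂ :=
  (∑ k ∈ Finset.range (n - 1), (-1 : ℂ) ^ (k + 1) * z k ^ a k * z (k + 1))
    + (-1 : ℂ) ^ n * z (n - 1) ^ a (n - 1)

/-- `g_a^{t,s}(z) = z_1 − s z_2 − t z_1^{a_1} z_2 − p_{−a}(z_2,…,z_n)` (0-based). -/
noncomputable def gMap (n : ℕ) (a : ℕ → ℕ) (t s : ℂ) (z : ℕ → ℂ) : ℂ :=
  z 0 - s * z 1 - t * z 0 ^ a 0 * z 1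
    - chainP (n - 1) (fun i => a (i + 1)) (fun i => z (i + 1))

/-- The complex partial derivative of `f` with respect to the `i`-th coordinate at `z`. -/
noncomputable def pd (f : (ℕ → ℂ) → ℂ) (i : ℕ) (z : ℕ → ℂ) : ℂ :=
  deriv (fun w => f (Function.update z i w)) (z i)

lemma my_hasDerivAt_update (z : ℕ → ℂ) (j i : ℕ) :
    HasDerivAt (fun w => Function.update z j w i) (if i = j then 1 else 0) (z j) := by
  by_cases h : i = j
  · subst h
    simpa [Function.update_apply] using (hasDerivAt_id' (z i))
  · simpa [Function.update_apply, h] using (hasDerivAt_const (z j) (z i))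

lemma pd_gMap (n : ℕ) (a : ℕ → ℕ) (t s : ℂ) (z : ℕ → ℂ) (j : ℕ) (hj : 1 ≤ j) :
    pd (gMap n a t s) j z =
      (if 1 = j then -(s + t * z 0 ^ a 0) else 0)
      + (∑ k ∈ Finset.range (n - 1 - 1),
          ((if k + 1 = j then (-1:ℂ)^k * ((a (k+1) : ℂ) * z (k+1) ^ (a (k+1) - 1)) * z (k+1+1) else 0)
           + (if k + 1 + 1 = j then (-1:ℂ)^k * z (k+1) ^ a (k+1) else 0)))
      + (if n-1-1+1 = j then (-1:ℂ)^(n-1) * (-1) * ((a (n-1-1+1) : ℂ) * z (n-1-1+1) ^ (a (n-1-1+1) - 1)) else 0) := by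
  have hU : ∀ i, HasDerivAt (fun w => Function.update z j w i)
      (if i = j then (1:ℂ) else 0) (z j) := my_hasDerivAt_update z j
  have H : HasDerivAt (fun w =>
      Function.update z j w 0 - s * Function.update z j w 1
        - t * Function.update z j w 0 ^ a 0 * Function.update z j w 1
        - ((∑ k ∈ Finset.range (n - 1 - 1),
              (-1:ℂ)^(k+1) * Function.update z j w (k+1) ^ a (k+1) * Function.update z j w (k+1+1))
            + (-1:ℂ)^(n-1) * Function.update z j w (n-1-1+1) ^ a (n-1-1+1)))
      ((if 0 = j then (1:ℂ) else 0)
        - s * (if 1 = j then (1:ℂ) else 0)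
        - (t * ((a 0:ℂ) * Function.update z j (z j) 0 ^ (a 0 - 1) * (if 0 = j then (1:ℂ) else 0)) * Function.update z j (z j) 1
           + t * Function.update z j (z j) 0 ^ a 0 * (if 1 = j then (1:ℂ) else 0))
        - ((∑ k ∈ Finset.range (n-1-1),
             ((-1:ℂ)^(k+1) * ((a (k+1):ℂ) * Function.update z j (z j) (k+1) ^ (a (k+1) - 1) * (if k+1 = j then (1:ℂ) else 0)) * Function.update z j (z j) (k+1+1)
              + (-1:ℂ)^(k+1) * Function.update z j (z j) (k+1) ^ a (k+1) * (if k+1+1 = j then (1:ℂ) else 0)))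
           + (-1:ℂ)^(n-1) * ((a (n-1-1+1):ℂ) * Function.update z j (z j) (n-1-1+1) ^ (a (n-1-1+1) - 1) * (if n-1-1+1 = j then (1:ℂ) else 0)))) (z j) := by
    exact (((hU 0).sub ((hU 1).const_mul s)).sub
        ((((hU 0).fun_pow (a 0)).const_mul t).fun_mul (hU 1))).sub
      ((HasDerivAt.fun_sum (fun k _ =>
          ((((hU (k+1)).fun_pow (a (k+1))).const_mul ((-1:ℂ)^(k+1))).fun_mul (hU (k+1+1))))).add
        (((hU (n-1-1+1)).fun_pow (a (n-1-1+1))).const_mul ((-1:ℂ)^(n-1))))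
  have EQ : pd (gMap n a t s) j z = deriv (fun w =>
      Function.update z j w 0 - s * Function.update z j w 1
        - t * Function.update z j w 0 ^ a 0 * Function.update z j w 1
        - ((∑ k ∈ Finset.range (n - 1 - 1),
              (-1:ℂ)^(k+1) * Function.update z j w (k+1) ^ a (k+1) * Function.update z j w (k+1+1))
            + (-1:ℂ)^(n-1) * Function.update z j w (n-1-1+1) ^ a (n-1-1+1))) (z j) := rfl
  rw [EQ, H.deriv]
  simp only [Function.update_eq_self, if_neg (show ¬(0:ℕ) = j by omega), mul_zero, zero_mul,
    mul_one, zero_add, add_zero, zero_sub, sub_zero]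
  have hA : (-(s * if 1 = j then (1:ℂ) else 0) - t * z 0 ^ a 0 * if 1 = j then (1:ℂ) else 0)
      = (if 1 = j then -(s + t * z 0 ^ a 0) else 0) := by
    split <;> ring
  have hterm : ∀ k ∈ Finset.range (n-1-1),
      ((-1:ℂ) ^ (k + 1) * (↑(a (k + 1)) * z (k + 1) ^ (a (k + 1) - 1) * if k + 1 = j then (1:ℂ) else 0) * z (k + 1 + 1)
        + (-1:ℂ) ^ (k + 1) * z (k + 1) ^ a (k + 1) * if k + 1 + 1 = j then (1:ℂ) else 0)
      = -((if k + 1 = j then (-1:ℂ) ^ k * (↑(a (k + 1)) * z (k + 1) ^ (a (k + 1) - 1)) * z (k + 1 + 1) else 0)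
          + (if k + 1 + 1 = j then (-1:ℂ) ^ k * z (k + 1) ^ a (k + 1) else 0)) := by
    intro k _
    rw [pow_succ]
    by_cases h1 : k + 1 = j
    · rw [if_pos h1, if_pos h1]
      by_cases h2 : k + 1 + 1 = j
      · rw [if_pos h2, if_pos h2]; ring
      · rw [if_neg h2, if_neg h2]; ring
    · rw [if_neg h1, if_neg h1]
      by_cases h2 : k + 1 + 1 = j
      · rw [if_pos h2, if_pos h2]; ring
      · rw [if_neg h2, if_neg h2]; ring
  have hlast : (-1:ℂ) ^ (n - 1) *
      (↑(a (n - 1 - 1 + 1)) * z (n - 1 - 1 + 1) ^ (a (n - 1 - 1 + 1) - 1) * if n - 1 - 1 + 1 = j then (1:ℂ) else 0)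
      = -(if n - 1 - 1 + 1 = j then
          (-1:ℂ) ^ (n - 1) * (-1) * (↑(a (n - 1 - 1 + 1)) * z (n - 1 - 1 + 1) ^ (a (n - 1 - 1 + 1) - 1)) else 0) := by
    split <;> ring
  rw [Finset.sum_congr rfl hterm, Finset.sum_neg_distrib, hlast, ← hA]
  ring

lemma sum_ite_shift (m j : ℕ) (hj : 1 ≤ j) (f : ℕ → ℂ) :
    (∑ k ∈ Finset.range m, if k + 1 = j then f k else 0) = if j - 1 < m then f (j-1) else 0 := by
  rw [Finset.sum_congr rfl (fun k _ => if_congr (by omega : (k+1 = j) ↔ (k = j-1)) rfl rfl),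
    Finset.sum_ite_eq' (Finset.range m) (j-1) f]
  simp [Finset.mem_range]

lemma sum_ite_shift2 (m j : ℕ) (f : ℕ → ℂ) :
    (∑ k ∈ Finset.range m, if k + 1 + 1 = j then f k else 0)
      = if 2 ≤ j ∧ j - 2 < m then f (j-2) else 0 := by
  by_cases h2 : 2 ≤ j
  · rw [Finset.sum_congr rfl (fun k _ => if_congr (by omega : (k+1+1 = j) ↔ (k = j-2)) rfl rfl),
      Finset.sum_ite_eq' (Finset.range m) (j-2) f]
    simp [Finset.mem_range, h2]
  · rw [Finset.sum_congr rfl (fun k _ => if_neg (by omega))]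
    simp [h2]

/-- If `∂g_a^{t,s}/∂z_j(z) = 0` for `2 ≤ j ≤ n` and
`s + t z_1^{a_1} = 0`, then `z_2 = ⋯ = z_n = 0` and `g_a^{t,s}(z) = z_1`; conversely if
`s + t z_1^{a_1} ≠ 0` then all the coordinates `z_2, …, z_n` are nonzero. -/
theorem stmt_12 (n : ℕ) (hn : 2 ≤ n) (a : ℕ → ℕ) (ha : ∀ i < n, 2 ≤ a i)
    (t s : ℂ) (z : ℕ → ℂ)
    (hcrit : ∀ j : ℕ, 1 ≤ j → j < n → pd (gMap n a t s) j z = 0) :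
    (s + t * z 0 ^ a 0 = 0 →
      (∀ j : ℕ, 1 ≤ j → j < n → z j = 0) ∧ gMap n a t s z = z 0) ∧
    (s + t * z 0 ^ a 0 ≠ 0 →
      ∀ j : ℕ, 1 ≤ j → j < n → z j ≠ 0) := by
  have E : ∀ j : ℕ, 1 ≤ j → j < n →
      (if 1 = j then -(s + t * z 0 ^ a 0) else 0)
      + ((if j - 1 < n-1-1 then (-1:ℂ)^(j-1) * ((a (j-1+1):ℂ) * z (j-1+1) ^ (a (j-1+1) - 1)) * z (j-1+1+1) else 0)
         + (if 2 ≤ j ∧ j - 2 < n-1-1 then (-1:ℂ)^(j-2) * z (j-2+1) ^ a (j-2+1) else 0))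
      + (if n-1-1+1 = j then (-1:ℂ)^(n-1) * (-1) * ((a (n-1-1+1) : ℂ) * z (n-1-1+1) ^ (a (n-1-1+1) - 1)) else 0) = 0 := by
    intro j hj hjn
    have h := hcrit j hj hjn
    rw [pd_gMap n a t s z j hj, Finset.sum_add_distrib,
      sum_ite_shift _ _ hj, sum_ite_shift2] at h
    exact h
  -- case n = 2
  rcases eq_or_lt_of_le hn with h2 | h3
  · -- n = 2
    subst h2
    have h := E 1 le_rfl (by omega)
    norm_num at h
    have e2 : s + t * z 0 ^ a 0 = (a 1:ℂ) * z 1 ^ (a 1 - 1) := by linear_combination -h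
    have ha1 : 2 ≤ a 1 := ha 1 (by omega)
    have hcast : ((a 1 : ℂ)) ≠ 0 := Nat.cast_ne_zero.mpr (by omega)
    constructor
    · intro hS0
      have hz1 : z 1 = 0 := by
        have h0 : (a 1:ℂ) * z 1 ^ (a 1 - 1) = 0 := by rw [← e2, hS0]
        have h1 := (mul_eq_zero.mp h0).resolve_left hcast
        exact pow_eq_zero_iff (by omega : a 1 - 1 ≠ 0) |>.mp h1
      refine ⟨fun j hj1 hj2 => by interval_cases j; exact hz1, ?_⟩
      simp [gMap, chainP, hz1, zero_pow (show a 1 ≠ 0 by omega)]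
    · intro hSne j hj1 hj2
      interval_cases j
      intro hz1
      apply hSne
      rw [e2, hz1, zero_pow (by omega : a 1 - 1 ≠ 0), mul_zero]
  · -- 3 ≤ n
    have h3' : 3 ≤ n := h3
    have ha1 : 2 ≤ a 1 := ha 1 (by omega)
    have eq1 : s + t * z 0 ^ a 0 = (a 1 : ℂ) * z 1 ^ (a 1 - 1) * z 2 := by
      have h := E 1 le_rfl (by omega)
      rw [if_pos rfl, if_pos (by omega : 1 - 1 < n-1-1), if_neg (by omega), if_neg (by omega)] at h
      norm_num at h
      linear_combination -h
    have eqlast : z (n-2) ^ a (n-2) = (a (n-1) : ℂ) * z (n-1) ^ (a (n-1) - 1) := by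
      have h := E (n-1) (by omega) (by omega)
      rw [if_neg (by omega), if_neg (by omega), if_pos (by omega : 2 ≤ n-1 ∧ n-1-2 < n-1-1),
        if_pos (by omega : n-1-1+1 = n-1)] at h
      rw [show n-1-2+1 = n-2 by omega, show n-1-1+1 = n-1 by omega] at h
      have hsg : (-1:ℂ)^(n-1) = (-1)^(n-1-2) := by
        have e : n - 1 = (n-1-2) + 2 := by omega
        set m := n - 1 - 2 with hm
        rw [e, pow_add]
        norm_num
      have hne : ((-1:ℂ))^(n-1-2) ≠ 0 := by
        simp
      have h2' : ((-1:ℂ))^(n-1-2) * (z (n-2) ^ a (n-2) - (a (n-1) : ℂ) * z (n-1) ^ (a (n-1) - 1)) = 0 := by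
        linear_combination h + ((a (n-1) : ℂ) * z (n-1) ^ (a (n-1) - 1)) * hsg
      have := (mul_eq_zero.mp h2').resolve_left hne
      exact sub_eq_zero.mp this
    have eqmid : ∀ j, 2 ≤ j → j + 2 ≤ n →
        z (j-1) ^ a (j-1) = (a j : ℂ) * z j ^ (a j - 1) * z (j+1) := by
      intro j hj2 hjn2
      have h := E j (by omega) (by omega)
      rw [if_neg (by omega), if_pos (by omega : j - 1 < n-1-1),
        if_pos (by omega : 2 ≤ j ∧ j - 2 < n-1-1), if_neg (by omega)] at h
      rw [show j - 1 + 1 = j by omega, show j - 2 + 1 = j - 1 by omega] at h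
      have hsg : (-1:ℂ)^(j-1) = (-1)^(j-2) * (-1) := by
        have e : j - 1 = (j-2) + 1 := by omega
        set m := j - 2 with hm
        rw [e, pow_succ]
      have hne : ((-1:ℂ))^(j-2) ≠ 0 := by simp
      have h2' : ((-1:ℂ))^(j-2) * (z (j-1) ^ a (j-1) - (a j : ℂ) * z j ^ (a j - 1) * z (j+1)) = 0 := by
        linear_combination h - ((a j : ℂ) * z j ^ (a j - 1) * z (j+1)) * hsg
      have := (mul_eq_zero.mp h2').resolve_left hne
      exact sub_eq_zero.mp this
    -- forward propagation of nonvanishing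
    have fwd : z 1 ≠ 0 → z 2 ≠ 0 → ∀ j, 1 ≤ j → j < n → z j ≠ 0 := by
      intro h1 h2 j
      induction j using Nat.strong_induction_on with
      | _ j IH =>
        intro hj1 hjn
        rcases (by omega : j = 1 ∨ j = 2 ∨ 3 ≤ j) with rfl | rfl | hj3
        · exact h1
        · exact h2
        · have hm := eqmid (j-1) (by omega) (by omega)
          rw [show j-1-1 = j-2 by omega, show j-1+1 = j by omega] at hm
          have hprev : z (j-2) ≠ 0 := IH (j-2) (by omega) (by omega) (by omega)
          intro hz
          apply hprev
          rw [hz, mul_zero] at hm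
          exact pow_eq_zero_iff (show a (j-2) ≠ 0 by have := ha (j-2) (by omega); omega) |>.mp hm
    constructor
    · -- S = 0 case
      intro hS0
      -- first : z (n-1) = 0
      have znlast : z (n-1) = 0 := by
        by_contra hzn
        have hzn2 : z (n-2) ≠ 0 := by
          intro h0
          rw [h0, zero_pow (show a (n-2) ≠ 0 by have := ha (n-2) (by omega); omega)] at eqlast
          have hc : ((a (n-1):ℂ)) ≠ 0 := Nat.cast_ne_zero.mpr (by have := ha (n-1) (by omega); omega)
          have := (mul_eq_zero.mp eqlast.symm).resolve_left hc
          exact hzn (pow_eq_zero_iff (show a (n-1) - 1 ≠ 0 by have := ha (n-1) (by omega); omega) |>.mp this)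
        have down : ∀ d : ℕ, d ≤ n - 2 → z (n-1-d) ≠ 0 := by
          intro d
          induction d using Nat.strong_induction_on with
          | _ d IH =>
            intro hd
            rcases (by omega : d = 0 ∨ d = 1 ∨ 2 ≤ d) with rfl | rfl | hd2
            · simpa using hzn
            · rw [show n-1-1 = n-2 by omega]; exact hzn2
            · have hm := eqmid (n-1-d+1) (by omega) (by omega)
              rw [show n-1-d+1-1 = n-1-d by omega] at hm
              have hz1' : z (n-1-d+1) ≠ 0 := by
                have := IH (d-1) (by omega) (by omega)
                rwa [show n-1-(d-1) = n-1-d+1 by omega] at this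
              have hz2' : z (n-1-d+1+1) ≠ 0 := by
                have := IH (d-2) (by omega) (by omega)
                rwa [show n-1-(d-2) = n-1-d+1+1 by omega] at this
              intro hz
              rw [hz, zero_pow (show a (n-1-d) ≠ 0 by have := ha (n-1-d) (by omega); omega)] at hm
              have hc : ((a (n-1-d+1):ℂ)) ≠ 0 := Nat.cast_ne_zero.mpr (by have := ha (n-1-d+1) (by omega); omega)
              rcases mul_eq_zero.mp hm.symm with h' | h'
              · rcases mul_eq_zero.mp h' with h'' | h''
                · exact hc h''
                · exact hz1' (pow_eq_zero_iff (show a (n-1-d+1) - 1 ≠ 0 by have := ha (n-1-d+1) (by omega); omega) |>.mp h'')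
              · exact hz2' h'
        have hz1 : z 1 ≠ 0 := by
          have := down (n-2) le_rfl
          rwa [show n-1-(n-2) = 1 by omega] at this
        have hz2 : z 2 ≠ 0 := by
          have := down (n-3) (by omega)
          rwa [show n-1-(n-3) = 2 by omega] at this
        have : s + t * z 0 ^ a 0 ≠ 0 := by
          rw [eq1]
          exact mul_ne_zero (mul_ne_zero (Nat.cast_ne_zero.mpr (by omega))
            (pow_ne_zero _ hz1)) hz2
        exact this hS0
      -- all zero
      have zeros : ∀ j, 1 ≤ j → j < n → z j = 0 := by
        have down0 : ∀ d : ℕ, d ≤ n - 2 → z (n-1-d) = 0 := by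
          intro d
          induction d using Nat.strong_induction_on with
          | _ d IH =>
            intro hd
            rcases (by omega : d = 0 ∨ 1 ≤ d) with rfl | hd1
            · simpa using znlast
            · have hnext : z (n-1-d+1) = 0 := by
                have := IH (d-1) (by omega) (by omega)
                rwa [show n-1-(d-1) = n-1-d+1 by omega] at this
              rcases (by omega : d = 1 ∨ 2 ≤ d) with rfl | hd2
              · have h0 : z (n-2) ^ a (n-2) = 0 := by
                  rw [eqlast, znlast, zero_pow (show a (n-1) - 1 ≠ 0 by
                    have := ha (n-1) (by omega); omega), mul_zero]
                have h1 := pow_eq_zero_iff (show a (n-2) ≠ 0 by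
                  have := ha (n-2) (by omega); omega) |>.mp h0
                rw [show n-1-1 = n-2 by omega]
                exact h1
              · have hm := eqmid (n-1-d+1) (by omega) (by omega)
                rw [show n-1-d+1-1 = n-1-d by omega] at hm
                rw [hnext, zero_pow (show a (n-1-d+1) - 1 ≠ 0 by have := ha (n-1-d+1) (by omega); omega),
                  mul_zero, zero_mul] at hm
                exact pow_eq_zero_iff (show a (n-1-d) ≠ 0 by have := ha (n-1-d) (by omega); omega) |>.mp hm
        intro j hj1 hjn
        have := down0 (n-1-j) (by omega)
        rwa [show n-1-(n-1-j) = j by omega] at this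
      refine ⟨zeros, ?_⟩
      have hz1 := zeros 1 le_rfl (by omega)
      have hzl := zeros (n-1) (by omega) (by omega)
      simp only [gMap, chainP]
      rw [show n-1-1+1 = n-1 by omega, hzl, hz1]
      rw [Finset.sum_eq_zero (fun k hk => by
        rw [zeros (k+1+1) (by omega) (by simp only [Finset.mem_range] at hk; omega), mul_zero])]
      rw [zero_pow (show a (n-1) ≠ 0 by have := ha (n-1) (by omega); omega)]
      ring
    · -- S ≠ 0 case
      intro hSne
      have hz1 : z 1 ≠ 0 := by
        intro h0
        apply hSne
        rw [eq1, h0, zero_pow (show a 1 - 1 ≠ 0 by omega), mul_zero, zero_mul]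
      have hz2 : z 2 ≠ 0 := by
        intro h0
        apply hSne
        rw [eq1, h0, mul_zero]
      exact fwd hz1 hz2
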